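/- Matching count in the even-type shuriken graph: Let N ≥ 4 be an even integer and let S_N^0 be the shuriken graph with tips v_1,…,v_N and inner vertices u_1,…,u_N. Then for every subset T of the set of tips {v_1,…,v_N}, the number of matchings of S_N^0 whose set of covered vertices is exactly {u_1,…,u_N} ∪ T is equal to 2 if |T| is even, and equal to 0 if |T| is odd. -/

import Mathlib

set_option linter.unusedSectionVars false


/-- The even-type shuriken graph `S_N^0` on vertices `Sum.inl t` (the tips `v_{t+1}`,
`0 ≤ t ≤ N-1`) and `Sum.inr i` (the inner vertices `u_{i+1}`, `0 ≤ i ≤ N-1`).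
Its edges are the inner cycle edges `{u_i, u_{i+1}}` (indices mod `N`) and the blade
edges `{v_j, u_{j-1}}, {v_j, u_j}` for `2 ≤ j ≤ N` together with `{v_1, u_1}` and
`{v_1, u_N}` (in 0-based terms: tip `t` is adjacent to inner `t` and inner `(t+N-1) % N`). -/
def shuriken0 (N : ℕ) : SimpleGraph (Fin N ⊕ Fin N) :=
  SimpleGraph.fromRel (fun a b =>
    match a, b with
    | Sum.inr i, Sum.inr j => j.1 = (i.1 + 1) % N
    | Sum.inl t, Sum.inr i => i = t ∨ i.1 = (t.1 + N - 1) % N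
    | _, _ => False)

namespace Shur0Aux

open SimpleGraph

variable {N : ℕ} [NeZero N]

lemma val_one_eq (hN : 4 ≤ N) : (1 : Fin N).1 = 1 := by
  rw [Fin.val_one']; exact Nat.mod_eq_of_lt (by omega)

lemma val_add_one (hN : 4 ≤ N) (a : Fin N) : (a + 1).1 = (a.1 + 1) % N := by
  rw [Fin.add_def, val_one_eq hN]

lemma val_sub_one (hN : 4 ≤ N) (a : Fin N) : (a - 1).1 = (a.1 + N - 1) % N := by
  rw [Fin.sub_def, val_one_eq hN]
  have h : N - 1 + a.1 = a.1 + N - 1 := by omega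
  rw [h]

lemma one_ne_zero' (hN : 4 ≤ N) : (1 : Fin N) ≠ 0 := by
  intro h
  have := congrArg Fin.val h
  rw [val_one_eq hN] at this
  simp at this

lemma two_ne_zero' (hN : 4 ≤ N) : (1 : Fin N) + 1 ≠ 0 := by
  intro h
  have := congrArg Fin.val h
  rw [Fin.add_def, val_one_eq hN] at this
  simp [Nat.mod_eq_of_lt (show 1 + 1 < N by omega)] at this

lemma add_one_ne (hN : 4 ≤ N) (a : Fin N) : a + 1 ≠ a := by
  intro h
  exact one_ne_zero' hN (by
    have := congrArg (· - a) h
    simpa [add_comm, add_sub_cancel_right, sub_self] using this)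

lemma sub_one_ne (hN : 4 ≤ N) (a : Fin N) : a - 1 ≠ a := by
  intro h
  apply add_one_ne hN (a - 1)
  rw [sub_add_cancel, h]

lemma sub_one_ne_add_one (hN : 4 ≤ N) (a : Fin N) : a - 1 ≠ a + 1 := by
  intro h
  apply two_ne_zero' hN
  have := congrArg (· - (a - 1)) h
  simp only [sub_self] at this
  have h2 : a + 1 - (a - 1) = 1 + 1 := by abel
  rw [h2] at this
  exact this.symm

lemma sub_add_cancel'' (a : Fin N) : a - 1 + 1 = a := sub_add_cancel a 1
lemma add_sub_cancel'' (a : Fin N) : a + 1 - 1 = a := add_sub_cancel_right a 1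

/-- adjacency between inner vertices -/
lemma adj_inr_inr (hN : 4 ≤ N) {i j : Fin N} :
    (shuriken0 N).Adj (Sum.inr i) (Sum.inr j) ↔ j = i + 1 ∨ i = j + 1 := by
  rw [shuriken0, SimpleGraph.fromRel_adj]
  constructor
  · rintro ⟨hne, h | h⟩
    · exact Or.inl (Fin.ext (by rw [val_add_one hN]; exact h))
    · exact Or.inr (Fin.ext (by rw [val_add_one hN]; exact h))
  · rintro (rfl | rfl)
    · exact ⟨by simpa using (add_one_ne hN i).symm, Or.inl (val_add_one hN i)⟩
    · exact ⟨by simpa using add_one_ne hN j, Or.inr (val_add_one hN j)⟩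

/-- adjacency between a tip and an inner vertex -/
lemma adj_inl_inr (hN : 4 ≤ N) {t i : Fin N} :
    (shuriken0 N).Adj (Sum.inl t) (Sum.inr i) ↔ i = t ∨ i = t - 1 := by
  rw [shuriken0, SimpleGraph.fromRel_adj]
  have hv : (t - 1).1 = (t.1 + N - 1) % N := val_sub_one hN t
  constructor
  · rintro ⟨hne, h | h⟩
    · rcases h with h | h
      · exact Or.inl h
      · exact Or.inr (Fin.ext (by rw [hv]; exact h))
    · exact h.elim
  · rintro (rfl | rfl)
    · exact ⟨by simp, Or.inl (Or.inl rfl)⟩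
    · exact ⟨by simp, Or.inl (Or.inr (by rw [← hv]))⟩

lemma adj_inr_inl (hN : 4 ≤ N) {t i : Fin N} :
    (shuriken0 N).Adj (Sum.inr i) (Sum.inl t) ↔ i = t ∨ i = t - 1 := by
  rw [SimpleGraph.adj_comm]; exact adj_inl_inr hN

lemma not_adj_inl_inl {t s : Fin N} : ¬ (shuriken0 N).Adj (Sum.inl t) (Sum.inl s) := by
  rw [shuriken0, SimpleGraph.fromRel_adj]
  rintro ⟨-, h | h⟩ <;> exact h

/-- the matching relation associated with a boolean "gap state" function `c`.
`c g = true` means the gap `g` (between `u_{g-1}` and `u_g`, containing tip `v_g`)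
covers its left vertex `u_{g-1}`. -/
def mAdj (T : Finset (Fin N)) (c : Fin N → Bool) :
    (Fin N ⊕ Fin N) → (Fin N ⊕ Fin N) → Prop
  | Sum.inr a, Sum.inr b =>
      (b = a + 1 ∧ a + 1 ∉ T ∧ c (a + 1) = true) ∨
      (a = b + 1 ∧ b + 1 ∉ T ∧ c (b + 1) = true)
  | Sum.inl t, Sum.inr a => t ∈ T ∧ ((c t = true ∧ a = t - 1) ∨ (c t = false ∧ a = t))
  | Sum.inr a, Sum.inl t => t ∈ T ∧ ((c t = true ∧ a = t - 1) ∨ (c t = false ∧ a = t))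
  | Sum.inl _, Sum.inl _ => False

/-- the "consistency" recurrence for gap states. -/
def P (T : Finset (Fin N)) (c : Fin N → Bool) : Prop :=
  ∀ i : Fin N, c (i + 1) = !(c i != decide (i ∈ T))

/-- the matching subgraph associated with a gap state function. -/
def mkM (hN : 4 ≤ N) (T : Finset (Fin N)) (c : Fin N → Bool) : (shuriken0 N).Subgraph where
  verts := Set.range (Sum.inr : Fin N → Fin N ⊕ Fin N) ∪
      (Sum.inl : Fin N → Fin N ⊕ Fin N) '' (T : Set (Fin N))
  Adj := mAdj T c
  adj_sub := by
    rintro (t | a) (s | b) h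
    · exact h.elim
    · rcases h with ⟨ht, ⟨-, rfl⟩ | ⟨-, rfl⟩⟩
      · exact (adj_inl_inr hN).2 (Or.inr rfl)
      · exact (adj_inl_inr hN).2 (Or.inl rfl)
    · rcases h with ⟨ht, ⟨-, rfl⟩ | ⟨-, rfl⟩⟩
      · exact (adj_inr_inl hN).2 (Or.inr rfl)
      · exact (adj_inr_inl hN).2 (Or.inl rfl)
    · rcases h with ⟨rfl, -, -⟩ | ⟨rfl, -, -⟩
      · exact (adj_inr_inr hN).2 (Or.inl rfl)
      · exact (adj_inr_inr hN).2 (Or.inr rfl)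
  edge_vert := by
    rintro (t | a) (s | b) h
    · exact h.elim
    · exact Or.inr ⟨t, h.1, rfl⟩
    · exact Or.inl ⟨a, rfl⟩
    · exact Or.inl ⟨a, rfl⟩
  symm := by
    constructor
    rintro (t | a) (s | b) h
    · exact h.elim
    · exact h
    · exact h
    · rcases h with h | h
      · exact Or.inr h
      · exact Or.inl h

lemma bool_rec_elim {x y d : Bool} (h : x = !(y != d)) :
    (x = true ∧ y = d) ∨ (x = false ∧ y = !d) := by
  cases x <;> cases y <;> cases d <;> simp_all

lemma eq_add_one_of_eq_sub_one {t a : Fin N} (h : a = t - 1) : t = a + 1 := by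
  rw [h, sub_add_cancel'']

lemma eq_sub_one_of_eq_add_one {a b : Fin N} (h : a = b + 1) : b = a - 1 := by
  rw [h, add_sub_cancel'']

lemma mkM_isMatching (hN : 4 ≤ N) {T : Finset (Fin N)} {c : Fin N → Bool}
    (hc : P T c) : (mkM hN T c).IsMatching := by
  rintro v (⟨a, rfl⟩ | ⟨t, htT, rfl⟩)
  · -- inner vertex a
    have hrec := hc a
    rcases bool_rec_elim hrec with ⟨hca1, heq⟩ | ⟨hca1, hneq⟩
    · -- c (a+1) = true : a is matched into gap a+1
      by_cases ha1T : a + 1 ∈ T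
      · -- partner is the tip a+1
        refine ⟨Sum.inl (a + 1), ⟨ha1T, Or.inl ⟨hca1, (add_sub_cancel'' a).symm⟩⟩, ?_⟩
        rintro (t | b) hw
        · rcases hw with ⟨htT', ⟨hct, hat⟩ | ⟨hct, hat⟩⟩
          · rw [eq_add_one_of_eq_sub_one hat]
          · -- t = a, c a = false, a ∈ T : contradicts heq
            rw [← hat] at htT' hct
            rw [hct, decide_eq_true htT'] at heq
            exact absurd heq (by simp)
        · rcases hw with ⟨hb, hbT, -⟩ | ⟨hab, hbT, hcb⟩
          · exact absurd ha1T hbT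
          · -- a = b + 1 : gap a active on right, contradicts heq
            have hba : b = a - 1 := eq_sub_one_of_eq_add_one hab
            rw [← hab] at hbT hcb
            rw [hcb, decide_eq_false hbT] at heq
            exact absurd heq (by simp)
      · -- partner is the inner vertex a+1
        refine ⟨Sum.inr (a + 1), Or.inl ⟨rfl, ha1T, hca1⟩, ?_⟩
        rintro (t | b) hw
        · rcases hw with ⟨htT', ⟨hct, hat⟩ | ⟨hct, hat⟩⟩
          · rw [eq_add_one_of_eq_sub_one hat] at htT'
            exact absurd htT' ha1T
          · rw [← hat] at htT' hct
            rw [hct, decide_eq_true htT'] at heq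
            exact absurd heq (by simp)
        · rcases hw with ⟨hb, -, -⟩ | ⟨hab, hbT, hcb⟩
          · rw [hb]
          · rw [← hab] at hbT hcb
            rw [hcb, decide_eq_false hbT] at heq
            exact absurd heq (by simp)
    · -- c (a+1) = false : a is matched into gap a
      by_cases haT : a ∈ T
      · -- c a = false, partner is the tip a
        have hca : c a = false := by rw [decide_eq_true haT] at hneq; simpa using hneq
        refine ⟨Sum.inl a, ⟨haT, Or.inr ⟨hca, rfl⟩⟩, ?_⟩
        rintro (t | b) hw
        · rcases hw with ⟨htT', ⟨hct, hat⟩ | ⟨hct, hat⟩⟩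
          · rw [eq_add_one_of_eq_sub_one hat] at hct
            rw [hct] at hca1
            exact absurd hca1 (by simp)
          · rw [hat]
        · rcases hw with ⟨hb, -, hcb⟩ | ⟨hab, hbT, -⟩
          · rw [hcb] at hca1
            exact absurd hca1 (by simp)
          · rw [← hab] at hbT
            exact absurd haT hbT
      · -- c a = true, partner is the inner vertex a-1
        have hca : c a = true := by rw [decide_eq_false haT] at hneq; simpa using hneq
        refine ⟨Sum.inr (a - 1), Or.inr ⟨(sub_add_cancel'' a).symm,
          by rw [sub_add_cancel'']; exact haT, by rw [sub_add_cancel'']; exact hca⟩, ?_⟩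
        rintro (t | b) hw
        · rcases hw with ⟨htT', ⟨hct, hat⟩ | ⟨hct, hat⟩⟩
          · rw [eq_add_one_of_eq_sub_one hat] at hct
            rw [hct] at hca1
            exact absurd hca1 (by simp)
          · rw [← hat] at htT'
            exact absurd htT' haT
        · rcases hw with ⟨hb, -, hcb⟩ | ⟨hab, -, -⟩
          · rw [hcb] at hca1
            exact absurd hca1 (by simp)
          · rw [eq_sub_one_of_eq_add_one hab]
  · -- tip vertex t ∈ T
    cases hct : c t with
    | true =>
      refine ⟨Sum.inr (t - 1), ⟨htT, Or.inl ⟨hct, rfl⟩⟩, ?_⟩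
      rintro (s | a) hw
      · exact hw.elim
      · rcases hw with ⟨-, ⟨-, ha⟩ | ⟨hct', -⟩⟩
        · rw [ha]
        · rw [hct'] at hct; exact absurd hct (by simp)
    | false =>
      refine ⟨Sum.inr t, ⟨htT, Or.inr ⟨hct, rfl⟩⟩, ?_⟩
      rintro (s | a) hw
      · exact hw.elim
      · rcases hw with ⟨-, ⟨hct', -⟩ | ⟨-, ha⟩⟩
        · rw [hct'] at hct; exact absurd hct (by simp)
        · rw [ha]

lemma mkM_adj_iff (hN : 4 ≤ N) {T : Finset (Fin N)} {c : Fin N → Bool} (g : Fin N) :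
    c g = true ↔ ((mkM hN T c).Adj (Sum.inr (g - 1)) (Sum.inr g) ∨
      (mkM hN T c).Adj (Sum.inr (g - 1)) (Sum.inl g)) := by
  constructor
  · intro hcg
    by_cases hgT : g ∈ T
    · exact Or.inr ⟨hgT, Or.inl ⟨hcg, rfl⟩⟩
    · exact Or.inl (Or.inl ⟨(sub_add_cancel'' g).symm,
        by rw [sub_add_cancel'']; exact hgT, by rw [sub_add_cancel'']; exact hcg⟩)
  · rintro (h | h)
    · rcases h with ⟨hg, -, hcg⟩ | ⟨hg, -, -⟩
      · rwa [sub_add_cancel''] at hcg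
      · exact absurd hg (sub_one_ne_add_one hN g)
    · rcases h with ⟨-, ⟨hcg, -⟩ | ⟨-, hgg⟩⟩
      · exact hcg
      · exact absurd hgg (sub_one_ne hN g)

lemma mkM_injective (hN : 4 ≤ N) {T : Finset (Fin N)} {c c' : Fin N → Bool}
    (h : mkM hN T c = mkM hN T c') : c = c' := by
  funext g
  have h1 := mkM_adj_iff (T := T) (c := c) hN g
  have h2 := mkM_adj_iff (T := T) (c := c') hN g
  rw [h] at h1
  cases hcg : c g <;> cases hcg' : c' g
  · rfl
  · exact absurd (h1.2 (h2.1 hcg')) (by rw [hcg]; simp)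
  · exact absurd (h2.2 (h1.1 hcg)) (by rw [hcg']; simp)
  · rfl

lemma exists_gap_state (hN : 4 ≤ N) {T : Finset (Fin N)} {M : (shuriken0 N).Subgraph}
    (hm : M.IsMatching)
    (hv : M.verts = Set.range (Sum.inr : Fin N → Fin N ⊕ Fin N) ∪
      (Sum.inl : Fin N → Fin N ⊕ Fin N) '' (T : Set (Fin N))) :
    ∃ c, P T c ∧ M = mkM hN T c := by
  classical
  set c : Fin N → Bool := fun g =>
    decide (M.Adj (Sum.inr (g - 1)) (Sum.inr g) ∨ M.Adj (Sum.inr (g - 1)) (Sum.inl g))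
    with hcdef
  have hvert_inr : ∀ a : Fin N, (Sum.inr a : Fin N ⊕ Fin N) ∈ M.verts := by
    intro a; rw [hv]; exact Or.inl ⟨a, rfl⟩
  have hvert_inl : ∀ t : Fin N, (Sum.inl t : Fin N ⊕ Fin N) ∈ M.verts ↔ t ∈ T := by
    intro t; rw [hv]; simp
  have hmemT : ∀ {t a : Fin N}, M.Adj (Sum.inl t) (Sum.inr a) → t ∈ T :=
    fun h => (hvert_inl _).1 (M.edge_vert h)
  have huniq : ∀ (a : Fin N) {w w' : Fin N ⊕ Fin N},
      M.Adj (Sum.inr a) w → M.Adj (Sum.inr a) w' → w = w' := by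
    intro a w w' h h'
    obtain ⟨w0, -, hu0⟩ := hm (hvert_inr a)
    rw [hu0 w h, hu0 w' h']
  have huniql : ∀ (t : Fin N) {w w' : Fin N ⊕ Fin N},
      M.Adj (Sum.inl t) w → M.Adj (Sum.inl t) w' → w = w' := by
    intro t w w' h h'
    obtain ⟨w0, -, hu0⟩ := hm (M.edge_vert h)
    rw [hu0 w h, hu0 w' h']
  have hpart_inl : ∀ {t : Fin N} {w : Fin N ⊕ Fin N}, M.Adj (Sum.inl t) w →
      w = Sum.inr t ∨ w = Sum.inr (t - 1) := by
    intro t w h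
    have hs := M.adj_sub h
    cases w with
    | inl s => exact absurd hs not_adj_inl_inl
    | inr a =>
      rcases (adj_inl_inr hN).1 hs with h1 | h1
      · exact Or.inl (by rw [h1])
      · exact Or.inr (by rw [h1])
  have hc_iff : ∀ g : Fin N, c g = true ↔
      (M.Adj (Sum.inr (g - 1)) (Sum.inr g) ∨ M.Adj (Sum.inr (g - 1)) (Sum.inl g)) := by
    intro g; rw [hcdef]; simp
  have hc1_iff : ∀ i : Fin N, c (i + 1) = true ↔
      (M.Adj (Sum.inr i) (Sum.inr (i + 1)) ∨ M.Adj (Sum.inr i) (Sum.inl (i + 1))) := by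
    intro i; rw [hc_iff, add_sub_cancel'']
  -- cycle edge characterization
  have s1 : ∀ a : Fin N, M.Adj (Sum.inr a) (Sum.inr (a + 1)) ↔
      (a + 1 ∉ T ∧ c (a + 1) = true) := by
    intro a
    constructor
    · intro h
      refine ⟨?_, (hc1_iff a).2 (Or.inl h)⟩
      intro hT
      obtain ⟨p, hp, -⟩ := hm ((hvert_inl (a + 1)).2 hT)
      rcases hpart_inl hp with rfl | rfl
      · exact absurd (huniq (a + 1) (M.adj_symm hp) (M.adj_symm h)) (by simp)
      · rw [add_sub_cancel''] at hp
        exact absurd (huniq a h (M.adj_symm hp)) (by simp)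
    · rintro ⟨hnT, hc1⟩
      rcases (hc1_iff a).1 hc1 with h | h
      · exact h
      · exact absurd (hmemT (M.adj_symm h)) hnT
  -- tip edge characterization
  have s4 : ∀ t a : Fin N, M.Adj (Sum.inl t) (Sum.inr a) ↔
      (t ∈ T ∧ ((c t = true ∧ a = t - 1) ∨ (c t = false ∧ a = t))) := by
    intro t a
    constructor
    · intro h
      refine ⟨hmemT h, ?_⟩
      rcases hpart_inl h with h1 | h1
      · have ha : a = t := by injection h1
        subst ha
        refine Or.inr ⟨?_, rfl⟩
        cases hct : c a with
        | false => rfl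
        | true =>
          exfalso
          rcases (hc_iff a).1 hct with h2 | h2
          · exact absurd (huniq a (M.adj_symm h) (M.adj_symm h2)) (by simp)
          · have h3 : Sum.inr a = (Sum.inr (a - 1) : Fin N ⊕ Fin N) :=
              huniql a h (M.adj_symm h2)
            have h4 : a = a - 1 := by injection h3
            exact sub_one_ne hN a h4.symm
      · have ha : a = t - 1 := by injection h1
        subst ha
        exact Or.inl ⟨(hc_iff t).2 (Or.inr (M.adj_symm h)), rfl⟩
    · rintro ⟨htT, ⟨hct, ha⟩ | ⟨hct, ha⟩⟩
      · rw [ha]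
        rcases (hc_iff t).1 hct with h | h
        · have h2 : M.Adj (Sum.inr (t - 1)) (Sum.inr (t - 1 + 1)) := by
            rwa [sub_add_cancel'']
          have h3 := (s1 (t - 1)).1 h2
          rw [sub_add_cancel''] at h3
          exact absurd htT h3.1
        · exact M.adj_symm h
      · rw [ha]
        obtain ⟨p, hp, -⟩ := hm ((hvert_inl t).2 htT)
        rcases hpart_inl hp with rfl | rfl
        · exact hp
        · have h2 := (hc_iff t).2 (Or.inr (M.adj_symm hp))
          rw [hct] at h2
          exact absurd h2 (by simp)
  -- the recurrence
  have hP : P T c := by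
    intro i
    obtain ⟨w, hw, -⟩ := hm (hvert_inr i)
    have hcases : w = Sum.inr (i + 1) ∨ w = Sum.inr (i - 1) ∨
        w = Sum.inl i ∨ w = Sum.inl (i + 1) := by
      have hs := M.adj_sub hw
      cases w with
      | inl t =>
        rcases (adj_inr_inl hN).1 hs with h1 | h1
        · right; right; left; rw [h1]
        · right; right; right; rw [eq_add_one_of_eq_sub_one h1]
      | inr b =>
        rcases (adj_inr_inr hN).1 hs with h1 | h1
        · left; rw [h1]
        · right; left; rw [eq_sub_one_of_eq_add_one h1]
    rcases hcases with rfl | rfl | rfl | rfl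
    · -- w = inr (i+1) : matched right via cycle edge
      have hc1 : c (i + 1) = true := (hc1_iff i).2 (Or.inl hw)
      have hci : c i = decide (i ∈ T) := by
        by_cases hiT : i ∈ T
        · rw [decide_eq_true hiT]
          obtain ⟨p, hp, -⟩ := hm ((hvert_inl i).2 hiT)
          rcases hpart_inl hp with rfl | rfl
          · exact absurd (huniq i (M.adj_symm hp) hw) (by simp)
          · exact (hc_iff i).2 (Or.inr (M.adj_symm hp))
        · rw [decide_eq_false hiT]
          cases hci0 : c i with
          | false => rfl
          | true =>
            exfalso
            rcases (hc_iff i).1 hci0 with h2 | h2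
            · have h3 := huniq i (M.adj_symm h2) hw
              have h4 : i - 1 = i + 1 := by injection h3
              exact sub_one_ne_add_one hN i h4
            · exact hiT (hmemT (M.adj_symm h2))
      rw [hc1, hci]
      cases decide (i ∈ T) <;> rfl
    · -- w = inr (i-1) : matched left via cycle edge
      have hci : c i = true := (hc_iff i).2 (Or.inl (M.adj_symm hw))
      have hiT : i ∉ T := by
        intro hiT
        obtain ⟨p, hp, -⟩ := hm ((hvert_inl i).2 hiT)
        rcases hpart_inl hp with rfl | rfl
        · exact absurd (huniq i (M.adj_symm hp) hw) (by simp)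
        · exact absurd (huniq (i - 1) (M.adj_symm hp) (M.adj_symm hw)) (by simp)
      have hc1 : c (i + 1) = false := by
        cases hci1 : c (i + 1) with
        | false => rfl
        | true =>
          exfalso
          rcases (hc1_iff i).1 hci1 with h2 | h2
          · have h3 := huniq i hw h2
            have h4 : i - 1 = i + 1 := by injection h3
            exact sub_one_ne_add_one hN i h4
          · exact absurd (huniq i hw h2) (by simp)
      rw [hc1, hci, decide_eq_false hiT]
      rfl
    · -- w = inl i : matched left via tip i
      have hiT : i ∈ T := hmemT (M.adj_symm hw)
      have hci : c i = false := by
        cases hci0 : c i with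
        | false => rfl
        | true =>
          exfalso
          rcases (hc_iff i).1 hci0 with h2 | h2
          · exact absurd (huniq i hw (M.adj_symm h2)) (by simp)
          · have h3 : Sum.inr i = (Sum.inr (i - 1) : Fin N ⊕ Fin N) :=
              huniql i (M.adj_symm hw) (M.adj_symm h2)
            have h4 : i = i - 1 := by injection h3
            exact sub_one_ne hN i h4.symm
      have hc1 : c (i + 1) = false := by
        cases hci1 : c (i + 1) with
        | false => rfl
        | true =>
          exfalso
          rcases (hc1_iff i).1 hci1 with h2 | h2
          · exact absurd (huniq i hw h2) (by simp)
          · have h3 := huniq i hw h2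
            have h4 : i = i + 1 := by injection h3
            exact add_one_ne hN i h4.symm
      rw [hc1, hci, decide_eq_true hiT]
      rfl
    · -- w = inl (i+1) : matched right via tip i+1
      have hc1 : c (i + 1) = true := (hc1_iff i).2 (Or.inr hw)
      have hci : c i = decide (i ∈ T) := by
        by_cases hiT : i ∈ T
        · rw [decide_eq_true hiT]
          obtain ⟨p, hp, -⟩ := hm ((hvert_inl i).2 hiT)
          rcases hpart_inl hp with rfl | rfl
          · have h3 := huniq i (M.adj_symm hp) hw
            have h4 : i = i + 1 := by injection h3
            exact absurd h4.symm (add_one_ne hN i)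
          · exact (hc_iff i).2 (Or.inr (M.adj_symm hp))
        · rw [decide_eq_false hiT]
          cases hci0 : c i with
          | false => rfl
          | true =>
            exfalso
            rcases (hc_iff i).1 hci0 with h2 | h2
            · exact absurd (huniq i (M.adj_symm h2) hw) (by simp)
            · exact hiT (hmemT (M.adj_symm h2))
      rw [hc1, hci]
      cases decide (i ∈ T) <;> rfl
  -- the subgraph equality
  refine ⟨c, hP, ?_⟩
  refine SimpleGraph.Subgraph.ext hv ?_
  funext x y
  apply propext
  cases x with
  | inl t =>
    cases y with
    | inl s => exact ⟨fun h => absurd (M.adj_sub h) not_adj_inl_inl, fun h => h.elim⟩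
    | inr a => exact s4 t a
  | inr a =>
    cases y with
    | inl t =>
      rw [SimpleGraph.Subgraph.adj_comm]
      exact s4 t a
    | inr b =>
      constructor
      · intro h
        rcases (adj_inr_inr hN).1 (M.adj_sub h) with h1 | h1
        · subst h1
          obtain ⟨hnT, hc1⟩ := (s1 a).1 h
          exact Or.inl ⟨rfl, hnT, hc1⟩
        · have h2 : M.Adj (Sum.inr b) (Sum.inr (b + 1)) := by
            rw [← h1]; exact M.adj_symm h
          obtain ⟨hnT, hc1⟩ := (s1 b).1 h2
          exact Or.inr ⟨h1, hnT, hc1⟩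
      · rintro (⟨rfl, hnT, hc1⟩ | ⟨rfl, hnT, hc1⟩)
        · exact (s1 a).2 ⟨hnT, hc1⟩
        · exact M.adj_symm ((s1 b).2 ⟨hnT, hc1⟩)

def cnt (T : Finset (Fin N)) (k : ℕ) : ℕ := (T.filter (fun t => t.1 < k)).card

lemma cnt_zero (T : Finset (Fin N)) : cnt T 0 = 0 := by simp [cnt]

lemma cnt_succ (T : Finset (Fin N)) (k : ℕ) (hk : k < N) :
    cnt T (k + 1) = cnt T k + (if (⟨k, hk⟩ : Fin N) ∈ T then 1 else 0) := by
  classical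
  unfold cnt
  have h1 : T.filter (fun t => t.1 < k + 1) =
      T.filter (fun t => t.1 < k ∨ t = ⟨k, hk⟩) := by
    apply Finset.filter_congr
    intro t _
    constructor
    · intro h
      rcases Nat.lt_or_ge t.1 k with h' | h'
      · exact Or.inl h'
      · exact Or.inr (Fin.ext (show t.1 = k by omega))
    · rintro (h | rfl)
      · omega
      · show k < k + 1; omega
  rw [h1, Finset.filter_or, Finset.card_union_of_disjoint, Finset.filter_eq']
  · split <;> simp
  · rw [Finset.disjoint_left]
    rintro t h1 h2
    simp only [Finset.mem_filter] at h1 h2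
    rw [h2.2] at h1
    exact absurd h1.2 (show ¬ (k < k) by omega)

lemma cnt_top (T : Finset (Fin N)) : cnt T N = T.card := by
  unfold cnt
  rw [Finset.filter_true_of_mem]
  intro t _
  exact t.2

lemma decide_odd_eq {x y : ℕ} (h : x % 2 = y % 2) : decide (Odd x) = decide (Odd y) :=
  decide_eq_decide.mpr (by rw [Nat.odd_iff, Nat.odd_iff, h])

lemma decide_odd_flip {x y : ℕ} (h : x % 2 ≠ y % 2) : decide (Odd x) = !decide (Odd y) := by
  by_cases hy : Odd y
  · rw [decide_eq_true hy]
    apply decide_eq_false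
    rw [Nat.odd_iff] at *
    omega
  · rw [decide_eq_false hy]
    simp only [Bool.not_false]
    apply decide_eq_true
    rw [Nat.odd_iff] at hy ⊢
    omega

lemma mk_add_one (hN : 4 ≤ N) (k : ℕ) (hk : k < N) (hk1 : k + 1 < N) :
    (⟨k, hk⟩ : Fin N) + 1 = ⟨k + 1, hk1⟩ := by
  apply Fin.ext
  rw [Fin.add_def, val_one_eq hN]
  exact Nat.mod_eq_of_lt hk1

lemma mk_last_add_one (hN : 4 ≤ N) :
    (⟨N - 1, by omega⟩ : Fin N) + 1 = 0 := by
  apply Fin.ext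
  rw [Fin.add_def, val_one_eq hN]
  show (N - 1 + 1) % N = 0
  rw [show N - 1 + 1 = N by omega, Nat.mod_self]

/-- the key step computation at the Bool/parity level -/
lemma parity_step (T : Finset (Fin N)) (b : Bool) (k : ℕ) (hk : k < N) :
    (b != decide (Odd (k + 1 + cnt T (k + 1)))) =
      !((b != decide (Odd (k + cnt T k))) != decide ((⟨k, hk⟩ : Fin N) ∈ T)) := by
  rw [cnt_succ T k hk]
  by_cases hmem : (⟨k, hk⟩ : Fin N) ∈ T
  · rw [if_pos hmem, decide_eq_true hmem,
      decide_odd_eq (show (k + 1 + (cnt T k + 1)) % 2 = (k + cnt T k) % 2 by omega)]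
    cases b <;> cases decide (Odd (k + cnt T k)) <;> rfl
  · rw [if_neg hmem, decide_eq_false hmem,
      decide_odd_flip (show (k + 1 + (cnt T k + 0)) % 2 ≠ (k + cnt T k) % 2 by omega)]
    cases b <;> cases decide (Odd (k + cnt T k)) <;> rfl

lemma formula (hN : 4 ≤ N) {T : Finset (Fin N)} {c : Fin N → Bool} (hc : P T c) :
    ∀ k (hk : k < N), c ⟨k, hk⟩ = (c 0 != decide (Odd (k + cnt T k))) := by
  intro k
  induction k with
  | zero =>
    intro hk
    have h0 : (⟨0, hk⟩ : Fin N) = 0 := Fin.ext (by simp)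
    rw [h0, cnt_zero]
    simp [Nat.odd_iff]
  | succ k ih =>
    intro hk1
    have hk : k < N := by omega
    rw [← mk_add_one hN k hk hk1, hc ⟨k, hk⟩, ih hk, parity_step T (c 0) k hk]

lemma bool_wrap {b e d : Bool} (h : b = !((b != e) != d)) : e = !d := by
  cases b <;> cases e <;> cases d <;> simp_all

/-- the wrap-around consistency: `e = !d` form -/
lemma wrap_eq (hN : 4 ≤ N) {T : Finset (Fin N)} {c : Fin N → Bool} (hc : P T c)
    (hlt : N - 1 < N) :
    decide (Odd (N - 1 + cnt T (N - 1))) =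
      !decide ((⟨N - 1, hlt⟩ : Fin N) ∈ T) := by
  have h1 := hc ⟨N - 1, hlt⟩
  rw [mk_last_add_one hN, formula hN hc (N - 1) hlt] at h1
  exact bool_wrap h1

lemma card_split (hN : 4 ≤ N) (T : Finset (Fin N)) :
    T.card = cnt T (N - 1) + (if (⟨N - 1, show N - 1 < N by omega⟩ : Fin N) ∈ T then 1 else 0) := by
  have hlt : N - 1 < N := by omega
  have h := cnt_succ T (N - 1) hlt
  rw [show N - 1 + 1 = N by omega, cnt_top] at h
  exact h

lemma even_of_P (hN : 4 ≤ N) (hNeven : Even N) {T : Finset (Fin N)} {c : Fin N → Bool}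
    (hc : P T c) : Even T.card := by
  have hw := wrap_eq hN hc (show N - 1 < N by omega)
  have hcard := card_split hN T
  obtain ⟨m, hm⟩ := hNeven
  by_cases hmem : (⟨N - 1, show N - 1 < N by omega⟩ : Fin N) ∈ T
  · rw [decide_eq_true hmem] at hw
    simp only [Bool.not_true, decide_eq_false_iff_not, Nat.odd_iff] at hw
    rw [if_pos hmem] at hcard
    rw [Nat.even_iff]
    omega
  · rw [decide_eq_false hmem] at hw
    simp only [Bool.not_false, decide_eq_true_eq, Nat.odd_iff] at hw
    rw [if_neg hmem] at hcard
    rw [Nat.even_iff]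
    omega

/-- the canonical gap state function with value `b` at `0`. -/
def cF (T : Finset (Fin N)) (b : Bool) : Fin N → Bool :=
  fun g => (b != decide (Odd (g.1 + cnt T g.1)))

lemma cF_zero (T : Finset (Fin N)) (b : Bool) : cF T b 0 = b := by
  simp [cF, cnt_zero, Nat.odd_iff]

lemma P_cF (hN : 4 ≤ N) (hNeven : Even N) {T : Finset (Fin N)} (hT : Even T.card)
    (b : Bool) : P T (cF T b) := by
  intro i
  rcases Nat.lt_or_ge (i.1 + 1) N with hlt | hge
  · have h1 : i + 1 = ⟨i.1 + 1, hlt⟩ := by rw [← mk_add_one hN i.1 i.2 hlt]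
    rw [h1]
    have h2 : cF T b ⟨i.1 + 1, hlt⟩ = (b != decide (Odd (i.1 + 1 + cnt T (i.1 + 1)))) := rfl
    have h3 : cF T b i = (b != decide (Odd (i.1 + cnt T i.1))) := rfl
    rw [h2, h3, parity_step T b i.1 i.2]
  · have hieq : i = ⟨N - 1, show N - 1 < N by omega⟩ := Fin.ext (show i.1 = N - 1 by omega)
    rw [hieq, mk_last_add_one hN, cF_zero]
    have h3 : cF T b ⟨N - 1, show N - 1 < N by omega⟩ =
        (b != decide (Odd (N - 1 + cnt T (N - 1)))) := rfl
    rw [h3]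
    have hcard := card_split hN T
    obtain ⟨m, hm⟩ := hNeven
    obtain ⟨p, hp⟩ := hT
    have hed : decide (Odd (N - 1 + cnt T (N - 1))) =
        !decide ((⟨N - 1, show N - 1 < N by omega⟩ : Fin N) ∈ T) := by
      by_cases hmem : (⟨N - 1, show N - 1 < N by omega⟩ : Fin N) ∈ T
      · rw [decide_eq_true hmem]
        simp only [Bool.not_true]
        apply decide_eq_false
        rw [if_pos hmem] at hcard
        rw [Nat.odd_iff]
        omega
      · rw [decide_eq_false hmem]
        simp only [Bool.not_false]
        apply decide_eq_true
        rw [if_neg hmem] at hcard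
        rw [Nat.odd_iff]
        omega
    rw [hed]
    cases b <;> cases decide ((⟨N - 1, show N - 1 < N by omega⟩ : Fin N) ∈ T) <;> rfl

lemma eq_of_P (hN : 4 ≤ N) {T : Finset (Fin N)} {c : Fin N → Bool} (hc : P T c) :
    c = cF T (c 0) := by
  funext g
  have := formula hN hc g.1 g.2
  rw [Fin.eta] at this
  exact this

lemma card_P (hN : 4 ≤ N) (hNeven : Even N) (T : Finset (Fin N)) :
    Nat.card {c : Fin N → Bool // P T c} = if Even T.card then 2 else 0 := by
  by_cases hT : Even T.card
  · rw [if_pos hT]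
    have hbij : Function.Bijective (fun b : Bool => (⟨cF T b, P_cF hN hNeven hT b⟩ :
        {c : Fin N → Bool // P T c})) := by
      constructor
      · intro b b' h
        have := congrArg (fun s => s.1 0) h
        simpa [cF_zero] using this
      · rintro ⟨c, hc⟩
        exact ⟨c 0, Subtype.ext (eq_of_P hN hc).symm⟩
    rw [← Nat.card_eq_of_bijective _ hbij]
    simp
  · rw [if_neg hT]
    have : IsEmpty {c : Fin N → Bool // P T c} :=
      ⟨fun s => hT (even_of_P hN hNeven s.2)⟩
    simp [Nat.card_of_isEmpty]


end Shur0Aux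

/-- **Matching count in the even-type shuriken graph**: for every even `N ≥ 4` and every
subset `T` of the tips, the number of matchings of `S_N^0` whose set of covered vertices
is exactly (all the inner vertices) `∪ T` equals `2` if `|T|` is even and `0` if `|T|`
is odd.  Matchings are represented as subgraphs `M` with `M.IsMatching`, whose vertex
set `M.verts` is the set of covered vertices. -/
theorem shuriken0_matching_count (N : ℕ) (hN : 4 ≤ N) (hNeven : Even N)
    (T : Finset (Fin N)) :
    Nat.card { M : (shuriken0 N).Subgraph // M.IsMatching ∧
        M.verts = Set.range (Sum.inr : Fin N → Fin N ⊕ Fin N) ∪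
          (Sum.inl : Fin N → Fin N ⊕ Fin N) '' (T : Set (Fin N)) } =
      if Even T.card then 2 else 0 := by
  haveI : NeZero N := ⟨by omega⟩
  rw [← Shur0Aux.card_P hN hNeven T]
  refine (Nat.card_eq_of_bijective
    (fun s => ⟨Shur0Aux.mkM hN T s.1, Shur0Aux.mkM_isMatching hN s.2, rfl⟩) ?_).symm
  constructor
  · rintro ⟨c, hc⟩ ⟨c', hc'⟩ h
    exact Subtype.ext (Shur0Aux.mkM_injective hN (congrArg Subtype.val h))
  · rintro ⟨M, hm, hv⟩
    obtain ⟨c, hP, hMeq⟩ := Shur0Aux.exists_gap_state hN hm hv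
    exact ⟨⟨c, hP⟩, Subtype.ext hMeq.symm⟩
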